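/- Let E be a row-finite directed graph, let λ = e_1e_2… be an infinite path in E with origin v_λ = o(λ), and suppose: (1) E has no circuits; (2) infinitely many infinite paths begin at v_λ and are equivalent to λ; (3) for every vertex w of λ with w ≠ v_λ, only finitely many infinite paths begin at w and are equivalent to λ; (4) every vertex of E is reachable from v_λ; (5) every vertex of E reaches some vertex of λ. Then E is not cofinal: there exists an infinite path μ in E, beginning at v_λ, such that the vertex t(e_1) (the terminus of the first edge of λ) does not reach any vertex of μ. -/

import Mathlib

namespace CKGraph

variable {V E : Type*}

/-- One-step relation: there is an edge from `v` to `w`. -/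
def Step (o t : E → V) (v w : V) : Prop := ∃ e, o e = v ∧ t e = w

/-- `Reach o t v w` means `v ≥ w`: there is a (possibly trivial) directed path
from `v` to `w`. -/
def Reach (o t : E → V) (v w : V) : Prop := Relation.ReflTransGen (Step o t) v w

/-- A finite path: consecutive edges are composable. -/
def IsPath (o t : E → V) (p : List E) : Prop := List.Chain' (fun e f => t e = o f) p

/-- An infinite path. -/
def IsInfPath (o t : E → V) (p : ℕ → E) : Prop := ∀ n, t (p n) = o (p (n + 1))

/-- Tail-equivalence of infinite paths: they eventually share the same tail. -/
def InfEquiv (p q : ℕ → E) : Prop := ∃ j k : ℕ, ∀ r : ℕ, p (j + r) = q (k + r)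

/-- The set of vertices occurring in a finite path. -/
def FinPathVerts (o t : E → V) (p : List E) : Set V := {v | ∃ e ∈ p, o e = v ∨ t e = v}

/-- The set of vertices occurring in an infinite path. -/
def InfPathVerts (o t : E → V) (p : ℕ → E) : Set V := {v | ∃ n, o (p n) = v}

/-- Every vertex emits at most finitely many edges. -/
def RowFinite (o : E → V) : Prop := ∀ v : V, {e : E | o e = v}.Finite

/-- Every vertex emits at least one edge. -/
def NoSinks (o : E → V) : Prop := ∀ v : V, ∃ e : E, o e = v

/-- Condition (M): for every vertex `v` and every infinite path `l`, only finitely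
many infinite paths begin at `v` and are equivalent to `l`. -/
def CondM (o t : E → V) : Prop :=
  ∀ (v : V) (l : ℕ → E), IsInfPath o t l →
    {p : ℕ → E | IsInfPath o t p ∧ o (p 0) = v ∧ InfEquiv p l}.Finite

/-- A circuit: a finite path of positive length whose origin and terminus agree. -/
def IsCircuit (o t : E → V) (p : List E) : Prop :=
  IsPath o t p ∧ ∃ h : p ≠ [], o (p.head h) = t (p.getLast h)

/-- An exit of a circuit: an edge not on the circuit whose origin is a vertex of
the circuit. -/
def IsExit (o t : E → V) (p : List E) (e : E) : Prop :=
  e ∉ p ∧ o e ∈ FinPathVerts o t p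

/-- A terminal circuit: a circuit with no exit. -/
def TerminalCircuit (o t : E → V) (p : List E) : Prop :=
  IsCircuit o t p ∧ ∀ e : E, ¬ IsExit o t p e

/-- A transitory circuit: a circuit with an exit, none of whose exits gets back
to the circuit. -/
def TransitoryCircuit (o t : E → V) (p : List E) : Prop :=
  IsCircuit o t p ∧ (∃ e : E, IsExit o t p e) ∧
    ∀ e : E, IsExit o t p e → ∀ w ∈ FinPathVerts o t p, ¬ Reach o t (t e) w

/-- The set of vertices of the infinite path `l` that emit multiple edges
returning to `l`; its cardinality is `N_l`. -/
def ReturnVerts (o t : E → V) (l : ℕ → E) : Set V :=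
  {v | v ∈ InfPathVerts o t l ∧ ∃ e f : E, e ≠ f ∧ o e = v ∧ o f = v ∧
    (∃ w ∈ InfPathVerts o t l, Reach o t (t e) w) ∧
    (∃ w ∈ InfPathVerts o t l, Reach o t (t f) w)}

/-- A maximal tail. -/
def MaximalTail (o t : E → V) (γ : Set V) : Prop :=
  γ.Nonempty ∧
  (∀ v₁ ∈ γ, ∀ v₂ ∈ γ, ∃ z ∈ γ, Reach o t v₁ z ∧ Reach o t v₂ z) ∧
  (∀ v ∈ γ, ∃ e : E, o e = v ∧ t e ∈ γ) ∧
  (∀ v w : V, Reach o t v w → w ∈ γ → v ∈ γ)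

/-- The edge set of the induced subgraph `Graph(γ)`. -/
def edgesIn (o t : E → V) (γ : Set V) : Set E := {e | o e ∈ γ ∧ t e ∈ γ}

/-- One-step relation in the subgraph with edge set `S`. -/
def StepIn (o t : E → V) (S : Set E) (v w : V) : Prop := ∃ e ∈ S, o e = v ∧ t e = w

/-- Reachability inside the subgraph with edge set `S`. -/
def ReachIn (o t : E → V) (S : Set E) (v w : V) : Prop :=
  Relation.ReflTransGen (StepIn o t S) v w

/-- `H` is saturated in the subgraph with vertex set `V0` and edge set `E0`:
every non-singular vertex of the subgraph all of whose successors lie in `H`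
belongs to `H`. -/
def SaturatedIn (o t : E → V) (V0 : Set V) (E0 : Set E) (H : Set V) : Prop :=
  ∀ v ∈ V0, (∃ e ∈ E0, o e = v) → {e ∈ E0 | o e = v}.Finite →
    (∀ e ∈ E0, o e = v → t e ∈ H) → v ∈ H

/-- The saturation of `S` in the subgraph `(V0, E0)`: the smallest subset of `V0`
containing `S` which is saturated in the subgraph. -/
def saturationIn (o t : E → V) (V0 : Set V) (E0 : Set E) (S : Set V) : Set V :=
  ⋂₀ {H : Set V | S ⊆ H ∧ H ⊆ V0 ∧ SaturatedIn o t V0 E0 H}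

/-- A hereditary subset of vertices. -/
def Hereditary (o t : E → V) (H : Set V) : Prop :=
  ∀ v ∈ H, ∀ w : V, Reach o t v w → w ∈ H

/-- A singular vertex: a sink or an infinite emitter. -/
def Singular (o : E → V) (v : V) : Prop :=
  (¬ ∃ e : E, o e = v) ∨ {e : E | o e = v}.Infinite

/-- A saturated subset of vertices: every non-singular vertex all of whose
successors lie in `H` belongs to `H`. -/
def Saturated (o t : E → V) (H : Set V) : Prop :=
  ∀ v : V, ¬ Singular o v → (∀ e : E, o e = v → t e ∈ H) → v ∈ H

/-- The saturation of `S`: the smallest saturated set containing `S`. -/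
def saturation (o t : E → V) (S : Set V) : Set V :=
  ⋂₀ {H : Set V | S ⊆ H ∧ Saturated o t H}


/-- Prepend an edge to an infinite sequence of edges. -/
def cons (e : E) (p : ℕ → E) : ℕ → E := fun n => match n with
  | 0 => e
  | n + 1 => p n

/-- The set of infinite paths starting at `u` equivalent to `l`. -/
def PSet (o t : E → V) (l : ℕ → E) (u : V) : Set (ℕ → E) :=
  {p : ℕ → E | IsInfPath o t p ∧ o (p 0) = u ∧ InfEquiv p l}

lemma cons_mem (o t : E → V) (l : ℕ → E) (e : E) {ρ : ℕ → E}
    (hρ : ρ ∈ PSet o t l (t e)) : cons e ρ ∈ PSet o t l (o e) := by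
  obtain ⟨hp, h0, j, k, hjk⟩ := hρ
  refine ⟨?_, rfl, j + 1, k, ?_⟩
  · intro n
    cases n with
    | zero => exact h0.symm
    | succ m => exact hp m
  · intro r
    have : j + 1 + r = (j + r) + 1 := by omega
    rw [this]
    exact hjk r

lemma step_infinite (o t : E → V) (l : ℕ → E) (e : E)
    (hb : (PSet o t l (t e)).Infinite) : (PSet o t l (o e)).Infinite := by
  have hinj : Set.InjOn (cons e) (PSet o t l (t e)) := by
    intro p _ q _ h
    funext n
    have := congrFun h (n + 1)
    simpa [cons] using this
  have himg : (cons e '' PSet o t l (t e)).Infinite := hb.image hinj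
  refine himg.mono ?_
  rintro p ⟨ρ, hρ, rfl⟩
  exact cons_mem o t l e hρ

lemma reach_infinite (o t : E → V) (l : ℕ → E) {a b : V} (h : Reach o t a b) :
    (PSet o t l b).Infinite → (PSet o t l a).Infinite := by
  induction h with
  | refl => exact id
  | tail _ hstep ih =>
    intro hb
    obtain ⟨e, he1, he2⟩ := hstep
    apply ih
    rw [← he1]
    rw [← he2] at hb
    exact step_infinite o t l e hb

lemma exists_next (o t : E → V) (hrf : RowFinite o) (l : ℕ → E) (u : V)
    (hu : (PSet o t l u).Infinite) :
    ∃ e, o e = u ∧ (PSet o t l (t e)).Infinite := by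
  by_contra hcon
  push_neg at hcon
  apply hu
  have hsub : PSet o t l u ⊆ ⋃ e ∈ {e : E | o e = u}, cons e '' PSet o t l (t e) := by
    intro p hp
    obtain ⟨hp1, hp2, j, k, hjk⟩ := hp
    refine Set.mem_biUnion (show p 0 ∈ {e : E | o e = u} from hp2) ?_
    refine ⟨fun n => p (n + 1), ⟨fun n => hp1 (n + 1), (hp1 0).symm, j, k + 1, ?_⟩, ?_⟩
    · intro r
      show p (j + r + 1) = l (k + 1 + r)
      have h1 : j + r + 1 = j + (r + 1) := by omega
      have h2 : k + 1 + r = k + (r + 1) := by omega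
      rw [h1, h2]
      exact hjk (r + 1)
    · funext n
      cases n with
      | zero => rfl
      | succ m => rfl
  exact Set.Finite.subset
    (Set.Finite.biUnion (hrf u) (fun e he => Set.Finite.image _ (hcon e he))) hsub

/-- Under hypotheses (1)–(5) of Lemma 3.7, `E` is not cofinal:
there is an infinite path `μ` beginning at `v_λ = o(l 0)` such that `t(e₁)`,
the terminus of the first edge of `l`, reaches no vertex of `μ`. -/
theorem stmt5 [Countable V] [Countable E] (o t : E → V) (hrf : RowFinite o)
    (l : ℕ → E) (hl : IsInfPath o t l)
    (h1 : ∀ p : List E, ¬ IsCircuit o t p)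
    (h2 : {μ : ℕ → E | IsInfPath o t μ ∧ o (μ 0) = o (l 0) ∧ InfEquiv μ l}.Infinite)
    (h3 : ∀ w ∈ InfPathVerts o t l, w ≠ o (l 0) →
      {μ : ℕ → E | IsInfPath o t μ ∧ o (μ 0) = w ∧ InfEquiv μ l}.Finite)
    (h4 : ∀ w : V, Reach o t (o (l 0)) w)
    (h5 : ∀ v : V, ∃ w ∈ InfPathVerts o t l, Reach o t v w) :
    ∃ μ : ℕ → E, IsInfPath o t μ ∧ o (μ 0) = o (l 0) ∧
      ∀ w ∈ InfPathVerts o t μ, ¬ Reach o t (t (l 0)) w := by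
  classical
  -- `t (l 0)` is a vertex of `l` distinct from the origin (no circuits).
  have hne : t (l 0) ≠ o (l 0) := by
    intro heq
    apply h1 [l 0]
    refine ⟨List.isChain_singleton _, ?_⟩
    refine ⟨by simp, ?_⟩
    simp [heq]
  have hmem : t (l 0) ∈ InfPathVerts o t l := ⟨1, (hl 0).symm⟩
  have hfin : (PSet o t l (t (l 0))).Finite := h3 (t (l 0)) hmem hne
  -- Build an infinite path `μ` from `v` along which `PSet` stays infinite.
  choose f hf1 hf2 using exists_next o t hrf l
  have h2' : (PSet o t l (o (l 0))).Infinite := h2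
  let step : {u : V // (PSet o t l u).Infinite} → {u : V // (PSet o t l u).Infinite} :=
    fun x => ⟨t (f x.1 x.2), hf2 x.1 x.2⟩
  let U : ℕ → {u : V // (PSet o t l u).Infinite} := fun n => step^[n] ⟨o (l 0), h2'⟩
  let μ : ℕ → E := fun n => f (U n).1 (U n).2
  have hU : ∀ n, U (n + 1) = step (U n) := fun n => Function.iterate_succ_apply' step n _
  refine ⟨μ, ?_, ?_, ?_⟩
  · intro n
    have : o (μ (n + 1)) = (U (n + 1)).1 := hf1 _ _
    rw [this, hU n]
  · exact hf1 _ _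
  · rintro w ⟨n, rfl⟩
    intro hreach
    have hwinf : (PSet o t l (o (μ n))).Infinite := by
      have : o (μ n) = (U n).1 := hf1 _ _
      rw [this]
      exact (U n).2
    exact hfin.not_infinite (reach_infinite o t l hreach hwinf)

end CKGraph
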